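/- The specification of non-deterministic insert is correct: for every element x and list ys, the set of results of ins (defined by ins x ys ∋ x :: ys and ins x (y :: ys) ∋ y :: zs for zs ∈ ins x ys) equals the set { as ++ [x] ++ bs | ys = as ++ bs }. -/
import Mathlib


inductive Ins {α : Type*} : α → List α → List α → Prop
  | base (x : α) (ys : List α) : Ins x ys (x :: ys)
  | step {x : α} {ys zs : List α} (y : α) : Ins x ys zs → Ins x (y :: ys) (y :: zs)

theorem ins_spec_correct {α : Type*} (x : α) (ys zs : List α) :
    Ins x ys zs ↔ ∃ as bs, ys = as ++ bs ∧ zs = as ++ [x] ++ bs := by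
  constructor
  · intro h
    induction h with
    | base ys => exact ⟨[], ys, rfl, rfl⟩
    | step y _ ih =>
      obtain ⟨as, bs, h1, h2⟩ := ih
      exact ⟨y :: as, bs, by simp [h1], by simp [h2]⟩
  · rintro ⟨as, bs, rfl, rfl⟩
    induction as with
    | nil => exact Ins.base x bs
    | cons a as ih => exact Ins.step a ih
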